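/- Let α > 0, c ∈ ℝⁿ, γ > 0, μ > 0, and let B(u) = −ln(α − ‖u − c‖²) if ‖u − c‖² < α and B(u) = +∞ otherwise. Then for every x ∈ ℝⁿ, the unique minimizer over u ∈ ℝⁿ of (1/2)‖x − u‖² + γμ B(u) is φ(x, μ, γ) = c + ((α − κ(x, μ, γ)²)/(α − κ(x, μ, γ)² + 2γμ)) (x − c), where κ(x, μ, γ) is the unique solution in [0, √α) of the cubic equation z³ − ‖x − c‖ z² − (α + 2γμ) z + α‖x − c‖ = 0. -/

import Mathlib

/-- Logarithmic barrier of the Euclidean ball `{u : ‖u - c‖² ≤ α}`. -/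
noncomputable def ballBarrier {n : ℕ} (α : ℝ) (c u : EuclideanSpace ℝ (Fin n)) : EReal :=
  if ‖u - c‖ ^ 2 < α then ((- Real.log (α - ‖u - c‖ ^ 2) : ℝ) : EReal) else ⊤

/-- The objective `u ↦ (1/2)‖x-u‖² + γμ B(u)` defining `prox_{γμB}(x)`. -/
noncomputable def ballProxObj {n : ℕ} (α : ℝ) (c : EuclideanSpace ℝ (Fin n)) (γ μ : ℝ)
    (x u : EuclideanSpace ℝ (Fin n)) : EReal :=
  ((1 / 2 * ‖x - u‖ ^ 2 : ℝ) : EReal) + ((γ * μ : ℝ) : EReal) * ballBarrier α c u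

set_option maxHeartbeats 1000000 in
theorem ball_barrier_prox {n : ℕ} (α : ℝ) (hα : 0 < α) (c : EuclideanSpace ℝ (Fin n))
    (γ μ : ℝ) (hγ : 0 < γ) (hμ : 0 < μ)
    (κ : EuclideanSpace ℝ (Fin n) → ℝ)
    (hκ : ∀ x : EuclideanSpace ℝ (Fin n), κ x ∈ Set.Ico 0 (Real.sqrt α) ∧
      (κ x) ^ 3 - ‖x - c‖ * (κ x) ^ 2 - (α + 2 * γ * μ) * (κ x) + α * ‖x - c‖ = 0) :
    ∀ x u : EuclideanSpace ℝ (Fin n),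
      u ≠ c + ((α - (κ x) ^ 2) / (α - (κ x) ^ 2 + 2 * γ * μ)) • (x - c) →
      ballProxObj α c γ μ x (c + ((α - (κ x) ^ 2) / (α - (κ x) ^ 2 + 2 * γ * μ)) • (x - c))
        < ballProxObj α c γ μ x u := by
  intro x u hu
  obtain ⟨⟨hk0, hk1⟩, hcubic⟩ := hκ x
  have hγμ : 0 < γ * μ := mul_pos hγ hμ
  set k := κ x with hk
  have hk2 : k ^ 2 < α := by
    nlinarith [Real.sq_sqrt hα.le, Real.sqrt_nonneg α]
  set r := ‖x - c‖ with hr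
  have hr0 : 0 ≤ r := norm_nonneg _
  set s : ℝ := α - k ^ 2 with hs
  have hspos : 0 < s := by rw [hs]; linarith
  have hdpos : 0 < s + 2 * γ * μ := by linarith
  set t : ℝ := s / (s + 2 * γ * μ) with ht
  have ht0 : 0 ≤ t := le_of_lt (div_pos hspos hdpos)
  have ht1 : t ≤ 1 := by
    rw [ht, div_le_one hdpos]; linarith
  set w := c + t • (x - c) with hw
  have hwc : w - c = t • (x - c) := by rw [hw]; abel
  have hrk : s * r = k * (s + 2 * γ * μ) := by
    rw [hs]; linear_combination hcubic
  have htr : t * r = k := by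
    rw [ht]; field_simp; linear_combination hrk
  have hksq : t ^ 2 * r ^ 2 = k ^ 2 := by
    linear_combination (t * r + k) * htr
  have hwc2 : ‖w - c‖ ^ 2 = k ^ 2 := by
    rw [hwc, norm_smul, Real.norm_eq_abs, abs_of_nonneg ht0, mul_pow]
    exact hksq
  have hwfeas : ‖w - c‖ ^ 2 < α := by rw [hwc2]; exact hk2
  simp only [ballProxObj, ballBarrier, if_pos hwfeas]
  by_cases hufeas : ‖u - c‖ ^ 2 < α
  · rw [if_pos hufeas, ← EReal.coe_mul, ← EReal.coe_mul, ← EReal.coe_add, ← EReal.coe_add,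
      EReal.coe_lt_coe_iff]
    -- real inequality
    set I : ℝ := inner ℝ (x - c) (u - c) with hI
    set V : ℝ := ‖u - c‖ ^ 2 with hV
    have hxu : ‖x - u‖ ^ 2 = r ^ 2 - 2 * I + V := by
      have h : x - u = (x - c) - (u - c) := by abel
      rw [h, norm_sub_sq_real]
    have hxw : ‖x - w‖ ^ 2 = (1 - t) ^ 2 * r ^ 2 := by
      have h : x - w = (1 - t) • (x - c) := by
        rw [hw, sub_smul, one_smul]; abel
      rw [h, norm_smul, Real.norm_eq_abs, abs_of_nonneg (by linarith)]
      ring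
    have huw : ‖u - w‖ ^ 2 = V - 2 * (t * I) + t ^ 2 * r ^ 2 := by
      have h : u - w = (u - c) - t • (x - c) := by rw [hw]; abel
      rw [h, norm_sub_sq_real, real_inner_smul_right, norm_smul, Real.norm_eq_abs,
        abs_of_nonneg ht0, mul_pow, real_inner_comm]
      try ring
    have huwpos : 0 < ‖u - w‖ ^ 2 :=
      pow_pos (norm_pos_iff.mpr (sub_ne_zero.mpr hu)) 2
    have hlam : 0 < γ * μ / s := div_pos hγμ hspos
    have htt : t * (1 + 2 * (γ * μ / s)) = 1 := by
      rw [ht]; field_simp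
    have hquad : 1 / 2 * ‖x - u‖ ^ 2 + (γ * μ / s) * V =
        1 / 2 * ‖x - w‖ ^ 2 + (γ * μ / s) * k ^ 2
          + ((1 + 2 * (γ * μ / s)) / 2) * ‖u - w‖ ^ 2 := by
      rw [hxu, hxw, huw, ← hksq]
      linear_combination (I - t * r ^ 2) * htt
    have hsV : 0 < α - V := by rw [hV]; linarith
    have hlog : Real.log (α - V) - Real.log s ≤ (α - V) / s - 1 := by
      have h1 := Real.log_le_sub_one_of_pos (div_pos hsV hspos)
      rwa [Real.log_div (ne_of_gt hsV) (ne_of_gt hspos)] at h1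
    have hlog2 : γ * μ * (Real.log (α - V) - Real.log s) ≤ γ * μ * ((α - V) / s - 1) :=
      mul_le_mul_of_nonneg_left hlog hγμ.le
    have hlog3 : γ * μ * ((α - V) / s - 1) = (γ * μ / s) * (k ^ 2 - V) := by
      rw [hs]; field_simp [(show α - k ^ 2 ≠ 0 by linarith)]; try ring
    rw [hwc2]
    have hssub : α - k ^ 2 = s := hs.symm
    rw [hssub]
    have hpos : 0 < ((1 + 2 * (γ * μ / s)) / 2) * ‖u - w‖ ^ 2 :=
      mul_pos (by linarith) huwpos
    linarith [hquad, hlog2, hlog3, hpos]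
  · rw [if_neg hufeas, EReal.coe_mul_top_of_pos hγμ,
      EReal.add_top_of_ne_bot (EReal.coe_ne_bot _), ← EReal.coe_mul, ← EReal.coe_add]
    exact EReal.coe_lt_top _
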